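/- Let h be an arithmetic function with Σ_{d≥1} |h(d)| d^{−1/2+η₀} < ∞ for some η₀ > 0, let S be a finite set of primes, and let g = 1*h (Dirichlet convolution, well-defined since h = g*μ). Then there exists η₁ ∈ (0, η₀) such that Σ over triples (m₁,m₂,m₃), (s₁,s₂,s₃) of positive integers all of whose prime factors lie in S, of |μ(s₁)μ(s₂)μ(s₃)|·|g(m₁m₂m₃)| / (m₁m₂m₃s₁s₂s₃)^{1/2−η₁}, converges. -/

import Mathlib

open ArithmeticFunction Finset
open scoped Pointwise

lemma sum_image_le_aux' {α β : Type*} [DecidableEq β] (s : Finset α) (f : α → β)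
    (g : β → ℝ) (hg : ∀ b, 0 ≤ g b) :
    ∑ y ∈ s.image f, g y ≤ ∑ x ∈ s, g (f x) := by
  classical
  induction s using Finset.induction_on with
  | empty => simp
  | insert a s ha ih =>
    rw [Finset.image_insert, Finset.sum_insert ha]
    by_cases hfa : f a ∈ s.image f
    · rw [Finset.insert_eq_self.mpr hfa]
      have := hg (f a)
      linarith
    · rw [Finset.sum_insert hfa]
      linarith

noncomputable def Wfn (S : Finset ℕ) (η : ℝ) : ℕ → ℝ :=
  fun n => if 0 < n ∧ n.primeFactors ⊆ S then (n : ℝ) ^ (-η) else 0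

lemma Wfn_nonneg (S : Finset ℕ) (η : ℝ) (n : ℕ) : 0 ≤ Wfn S η n := by
  unfold Wfn; split <;> positivity

lemma Wfn_eq (S : Finset ℕ) (η : ℝ) (n : ℕ) (h1 : 0 < n) (h2 : n.primeFactors ⊆ S) :
    Wfn S η n = (n : ℝ) ^ (-η) := if_pos ⟨h1, h2⟩

noncomputable def P9fn (S : Finset ℕ) (η : ℝ) : ℕ×ℕ×ℕ×ℕ×ℕ×ℕ×ℕ×ℕ×ℕ → ℝ :=
  fun x => Wfn S η x.1 * (Wfn S η x.2.1 * (Wfn S η x.2.2.1 * (Wfn S η x.2.2.2.1 *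
    (Wfn S η x.2.2.2.2.1 * (Wfn S η x.2.2.2.2.2.1 * (Wfn S η x.2.2.2.2.2.2.1 *
      (Wfn S η x.2.2.2.2.2.2.2.1 * Wfn S η x.2.2.2.2.2.2.2.2)))))))

lemma P9fn_nonneg (S : Finset ℕ) (η : ℝ) (x : ℕ×ℕ×ℕ×ℕ×ℕ×ℕ×ℕ×ℕ×ℕ) :
    0 ≤ P9fn S η x := by
  unfold P9fn
  have h1 := Wfn_nonneg S η x.1
  have h2 := Wfn_nonneg S η x.2.1
  have h3 := Wfn_nonneg S η x.2.2.1
  have h4 := Wfn_nonneg S η x.2.2.2.1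
  have h5 := Wfn_nonneg S η x.2.2.2.2.1
  have h6 := Wfn_nonneg S η x.2.2.2.2.2.1
  have h7 := Wfn_nonneg S η x.2.2.2.2.2.2.1
  have h8 := Wfn_nonneg S η x.2.2.2.2.2.2.2.1
  have h9 := Wfn_nonneg S η x.2.2.2.2.2.2.2.2
  positivity

set_option maxHeartbeats 2000000 in
lemma P9fn_summable (S : Finset ℕ) (η : ℝ) (hW : Summable (Wfn S η)) :
    Summable (P9fn S η) := by
  have hW0 : (0 : ℕ → ℝ) ≤ Wfn S η := fun n => Wfn_nonneg S η n
  have h2 : Summable (fun x : ℕ × ℕ => Wfn S η x.1 * Wfn S η x.2) :=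
    hW.mul_of_nonneg hW hW0 hW0
  have h2n : (0 : ℕ × ℕ → ℝ) ≤ fun x : ℕ × ℕ => Wfn S η x.1 * Wfn S η x.2 :=
    fun x => mul_nonneg (Wfn_nonneg _ _ _) (Wfn_nonneg _ _ _)
  have h3 : Summable (fun x : ℕ × ℕ × ℕ => Wfn S η x.1 * (Wfn S η x.2.1 * Wfn S η x.2.2)) :=
    hW.mul_of_nonneg h2 hW0 h2n
  have h3n : (0 : ℕ × ℕ × ℕ → ℝ) ≤ fun x : ℕ × ℕ × ℕ =>
      Wfn S η x.1 * (Wfn S η x.2.1 * Wfn S η x.2.2) :=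
    fun x => mul_nonneg (Wfn_nonneg _ _ _) (h2n x.2)
  have h4 : Summable (fun x : ℕ × ℕ × ℕ × ℕ =>
      Wfn S η x.1 * (Wfn S η x.2.1 * (Wfn S η x.2.2.1 * Wfn S η x.2.2.2))) :=
    hW.mul_of_nonneg h3 hW0 h3n
  have h4n : (0 : ℕ × ℕ × ℕ × ℕ → ℝ) ≤ fun x : ℕ × ℕ × ℕ × ℕ =>
      Wfn S η x.1 * (Wfn S η x.2.1 * (Wfn S η x.2.2.1 * Wfn S η x.2.2.2)) :=
    fun x => mul_nonneg (Wfn_nonneg _ _ _) (h3n x.2)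
  have h5 : Summable (fun x : ℕ × ℕ × ℕ × ℕ × ℕ =>
      Wfn S η x.1 * (Wfn S η x.2.1 * (Wfn S η x.2.2.1 * (Wfn S η x.2.2.2.1 *
        Wfn S η x.2.2.2.2)))) :=
    hW.mul_of_nonneg h4 hW0 h4n
  have h5n : (0 : ℕ × ℕ × ℕ × ℕ × ℕ → ℝ) ≤ fun x : ℕ × ℕ × ℕ × ℕ × ℕ =>
      Wfn S η x.1 * (Wfn S η x.2.1 * (Wfn S η x.2.2.1 * (Wfn S η x.2.2.2.1 *
        Wfn S η x.2.2.2.2))) :=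
    fun x => mul_nonneg (Wfn_nonneg _ _ _) (h4n x.2)
  have h6 : Summable (fun x : ℕ × ℕ × ℕ × ℕ × ℕ × ℕ =>
      Wfn S η x.1 * (Wfn S η x.2.1 * (Wfn S η x.2.2.1 * (Wfn S η x.2.2.2.1 *
        (Wfn S η x.2.2.2.2.1 * Wfn S η x.2.2.2.2.2))))) :=
    hW.mul_of_nonneg h5 hW0 h5n
  have h6n : (0 : ℕ × ℕ × ℕ × ℕ × ℕ × ℕ → ℝ) ≤ fun x : ℕ × ℕ × ℕ × ℕ × ℕ × ℕ =>
      Wfn S η x.1 * (Wfn S η x.2.1 * (Wfn S η x.2.2.1 * (Wfn S η x.2.2.2.1 *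
        (Wfn S η x.2.2.2.2.1 * Wfn S η x.2.2.2.2.2)))) :=
    fun x => mul_nonneg (Wfn_nonneg _ _ _) (h5n x.2)
  have h7 : Summable (fun x : ℕ × ℕ × ℕ × ℕ × ℕ × ℕ × ℕ =>
      Wfn S η x.1 * (Wfn S η x.2.1 * (Wfn S η x.2.2.1 * (Wfn S η x.2.2.2.1 *
        (Wfn S η x.2.2.2.2.1 * (Wfn S η x.2.2.2.2.2.1 * Wfn S η x.2.2.2.2.2.2)))))) :=
    hW.mul_of_nonneg h6 hW0 h6n
  have h7n : (0 : ℕ × ℕ × ℕ × ℕ × ℕ × ℕ × ℕ → ℝ) ≤ fun x : ℕ × ℕ × ℕ × ℕ × ℕ × ℕ × ℕ =>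
      Wfn S η x.1 * (Wfn S η x.2.1 * (Wfn S η x.2.2.1 * (Wfn S η x.2.2.2.1 *
        (Wfn S η x.2.2.2.2.1 * (Wfn S η x.2.2.2.2.2.1 * Wfn S η x.2.2.2.2.2.2))))) :=
    fun x => mul_nonneg (Wfn_nonneg _ _ _) (h6n x.2)
  have h8 : Summable (fun x : ℕ × ℕ × ℕ × ℕ × ℕ × ℕ × ℕ × ℕ =>
      Wfn S η x.1 * (Wfn S η x.2.1 * (Wfn S η x.2.2.1 * (Wfn S η x.2.2.2.1 *
        (Wfn S η x.2.2.2.2.1 * (Wfn S η x.2.2.2.2.2.1 * (Wfn S η x.2.2.2.2.2.2.1 *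
          Wfn S η x.2.2.2.2.2.2.2))))))) :=
    hW.mul_of_nonneg h7 hW0 h7n
  have h8n : (0 : ℕ × ℕ × ℕ × ℕ × ℕ × ℕ × ℕ × ℕ → ℝ) ≤ fun x : ℕ × ℕ × ℕ × ℕ × ℕ × ℕ × ℕ × ℕ =>
      Wfn S η x.1 * (Wfn S η x.2.1 * (Wfn S η x.2.2.1 * (Wfn S η x.2.2.2.1 *
        (Wfn S η x.2.2.2.2.1 * (Wfn S η x.2.2.2.2.2.1 * (Wfn S η x.2.2.2.2.2.2.1 *
          Wfn S η x.2.2.2.2.2.2.2)))))) :=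
    fun x => mul_nonneg (Wfn_nonneg _ _ _) (h7n x.2)
  exact hW.mul_of_nonneg h8 hW0 h8n


lemma pow_mul_inj' (p : ℕ) (hp : p.Prime) (a b k l : ℕ) (hk : ¬ p ∣ k) (hl : ¬ p ∣ l)
    (heq : p ^ a * k = p ^ b * l) : a = b ∧ k = l := by
  have hk0 : k ≠ 0 := fun h => hk (h ▸ dvd_zero p)
  have hl0 : l ≠ 0 := fun h => hl (h ▸ dvd_zero p)
  have hfk : (p ^ a * k).factorization p = a := by
    rw [Nat.factorization_mul (pow_ne_zero a hp.pos.ne') hk0]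
    simp [hp.factorization_pow, Nat.factorization_eq_zero_of_not_dvd hk]
  have hfl : (p ^ b * l).factorization p = b := by
    rw [Nat.factorization_mul (pow_ne_zero b hp.pos.ne') hl0]
    simp [hp.factorization_pow, Nat.factorization_eq_zero_of_not_dvd hl]
  have hab : a = b := by rw [← hfk, heq, hfl]
  subst hab
  exact ⟨rfl, Nat.eq_of_mul_eq_mul_left (pow_pos hp.pos a) heq⟩

lemma smooth_summable (ε : ℝ) (hε : 0 < ε) (S : Finset ℕ) (hS : ∀ p ∈ S, p.Prime) :
    Summable (fun n : ℕ => if 0 < n ∧ n.primeFactors ⊆ S then (n : ℝ) ^ (-ε) else 0) := by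
  classical
  induction S using Finset.induction_on with
  | empty =>
    apply summable_of_ne_finset_zero (s := {1})
    intro n hn
    rw [if_neg]
    rintro ⟨h1, h2⟩
    rcases (Nat.primeFactors_eq_empty).mp (Finset.subset_empty.mp h2) with h | h
    · omega
    · exact hn (by simp [h])
  | insert p T hpT ih =>
    have hp : p.Prime := hS p (Finset.mem_insert_self p T)
    have ihT := ih (fun q hq => hS q (Finset.mem_insert_of_mem hq))
    set WT : ℕ → ℝ := fun k => if 0 < k ∧ k.primeFactors ⊆ T then (k : ℝ) ^ (-ε) else 0 with hWT
    set f : ℕ → ℝ := fun n =>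
      if 0 < n ∧ n.primeFactors ⊆ insert p T then (n : ℝ) ^ (-ε) else 0 with hf
    have hp1 : (1 : ℝ) < (p : ℝ) := by exact_mod_cast hp.one_lt
    have hr0 : (0 : ℝ) ≤ (p : ℝ) ^ (-ε) := Real.rpow_nonneg (by positivity) _
    have hr1 : (p : ℝ) ^ (-ε) < 1 := Real.rpow_lt_one_of_one_lt_of_neg hp1 (by linarith)
    have hgeom : Summable (fun a : ℕ => ((p : ℝ) ^ (-ε)) ^ a) :=
      summable_geometric_of_lt_one hr0 hr1
    have hprod : Summable (fun x : ℕ × ℕ => ((p : ℝ) ^ (-ε)) ^ x.1 * WT x.2) :=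
      hgeom.mul_of_nonneg ihT (fun a => pow_nonneg hr0 a)
        (fun k => by by_cases hc : 0 < k ∧ k.primeFactors ⊆ T <;> simp [hWT, hc] <;> positivity)
    set D := {x : ℕ × ℕ // 0 < x.2 ∧ x.2.primeFactors ⊆ T} with hD
    have hsub : Summable (fun y : D => ((p : ℝ) ^ (-ε)) ^ (y : ℕ × ℕ).1 * WT (y : ℕ × ℕ).2) :=
      hprod.subtype _
    set φ : D → ℕ := fun y => p ^ (y : ℕ × ℕ).1 * (y : ℕ × ℕ).2 with hφ
    have hpdvd : ∀ y : D, ¬ p ∣ (y : ℕ × ℕ).2 := by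
      rintro ⟨⟨a, k⟩, hk1, hk2⟩ hdvd
      exact hpT (hk2 (Nat.mem_primeFactors.mpr ⟨hp, hdvd, hk1.ne'⟩))
    have hinj : Function.Injective φ := by
      rintro ⟨⟨a, k⟩, hk⟩ ⟨⟨b, l⟩, hl⟩ heq
      have := pow_mul_inj' p hp a b k l (hpdvd ⟨⟨a,k⟩,hk⟩) (hpdvd ⟨⟨b,l⟩,hl⟩) heq
      exact Subtype.ext (Prod.ext this.1 this.2)
    have hvan : ∀ x ∉ Set.range φ, f x = 0 := by
      intro x hx
      rw [hf]
      simp only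
      rw [if_neg]
      rintro ⟨hx1, hx2⟩
      apply hx
      refine ⟨⟨(x.factorization p, ordCompl[p] x), Nat.ordCompl_pos p hx1.ne', ?_⟩, ?_⟩
      · intro q hq
        have hqx : q ∈ x.primeFactors :=
          Nat.primeFactors_mono (Nat.ordCompl_dvd x p) hx1.ne' hq
        have hqp : q ≠ p := by
          rintro rfl
          exact Nat.not_dvd_ordCompl hp hx1.ne' (Nat.dvd_of_mem_primeFactors hq)
        rcases Finset.mem_insert.mp (hx2 hqx) with h | h
        · exact absurd h hqp
        · exact h
      · exact Nat.ordProj_mul_ordCompl_eq_self x p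
    refine (Function.Injective.summable_iff hinj hvan).mp ?_
    apply hsub.congr
    rintro ⟨⟨a, k⟩, hk1, hk2⟩
    simp only [Function.comp_apply, hφ, hf, hWT]
    rw [if_pos ⟨hk1, hk2⟩, if_pos]
    · rw [Nat.cast_mul, Nat.cast_pow,
        Real.mul_rpow (by positivity) (by positivity),
        ← Real.rpow_natCast (p : ℝ) a, ← Real.rpow_mul (by positivity),
        mul_comm (a : ℝ) (-ε), Real.rpow_mul (by positivity), Real.rpow_natCast]
    · constructor
      · exact Nat.mul_pos (pow_pos hp.pos a) hk1
      · intro q hq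
        rcases Nat.mem_primeFactors.mp hq with ⟨hq1, hq2, _⟩
        rcases hq1.dvd_mul.mp hq2 with h | h
        · exact Finset.mem_insert.mpr
            (Or.inl ((Nat.prime_dvd_prime_iff_eq hq1 hp).mp (hq1.dvd_of_dvd_pow h)))
        · exact Finset.mem_insert_of_mem (hk2 (Nat.mem_primeFactors.mpr ⟨hq1, h, hk1.ne'⟩))


lemma crux_ineq (p q η : ℝ) (hpq : p + q ≤ -η) (hq : q ≤ -η)
    (a1 a2 a3 b1 b2 b3 c1 c2 c3 : ℝ)
    (ha1 : 1 ≤ a1) (ha2 : 1 ≤ a2) (ha3 : 1 ≤ a3)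
    (hb1 : 1 ≤ b1) (hb2 : 1 ≤ b2) (hb3 : 1 ≤ b3)
    (hc1 : 1 ≤ c1) (hc2 : 1 ≤ c2) (hc3 : 1 ≤ c3) :
    (a1 * a2 * a3) ^ p * ((a1 * b1) * (a2 * b2) * (a3 * b3) * c1 * c2 * c3) ^ q ≤
      a1 ^ (-η) * (b1 ^ (-η) * (a2 ^ (-η) * (b2 ^ (-η) * (a3 ^ (-η) * (b3 ^ (-η) *
        (c1 ^ (-η) * (c2 ^ (-η) * c3 ^ (-η)))))))) := by
  have pa1 : (0:ℝ) < a1 := lt_of_lt_of_le one_pos ha1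
  have pa2 : (0:ℝ) < a2 := lt_of_lt_of_le one_pos ha2
  have pa3 : (0:ℝ) < a3 := lt_of_lt_of_le one_pos ha3
  have pb1 : (0:ℝ) < b1 := lt_of_lt_of_le one_pos hb1
  have pb2 : (0:ℝ) < b2 := lt_of_lt_of_le one_pos hb2
  have pb3 : (0:ℝ) < b3 := lt_of_lt_of_le one_pos hb3
  have pc1 : (0:ℝ) < c1 := lt_of_lt_of_le one_pos hc1
  have pc2 : (0:ℝ) < c2 := lt_of_lt_of_le one_pos hc2
  have pc3 : (0:ℝ) < c3 := lt_of_lt_of_le one_pos hc3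
  have k1 : a1 ^ p * a1 ^ q ≤ a1 ^ (-η) := by
    rw [← Real.rpow_add pa1]; exact Real.rpow_le_rpow_of_exponent_le ha1 hpq
  have k2 : a2 ^ p * a2 ^ q ≤ a2 ^ (-η) := by
    rw [← Real.rpow_add pa2]; exact Real.rpow_le_rpow_of_exponent_le ha2 hpq
  have k3 : a3 ^ p * a3 ^ q ≤ a3 ^ (-η) := by
    rw [← Real.rpow_add pa3]; exact Real.rpow_le_rpow_of_exponent_le ha3 hpq
  have l1 : b1 ^ q ≤ b1 ^ (-η) := Real.rpow_le_rpow_of_exponent_le hb1 hq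
  have l2 : b2 ^ q ≤ b2 ^ (-η) := Real.rpow_le_rpow_of_exponent_le hb2 hq
  have l3 : b3 ^ q ≤ b3 ^ (-η) := Real.rpow_le_rpow_of_exponent_le hb3 hq
  have m1 : c1 ^ q ≤ c1 ^ (-η) := Real.rpow_le_rpow_of_exponent_le hc1 hq
  have m2 : c2 ^ q ≤ c2 ^ (-η) := Real.rpow_le_rpow_of_exponent_le hc2 hq
  have m3 : c3 ^ q ≤ c3 ^ (-η) := Real.rpow_le_rpow_of_exponent_le hc3 hq
  calc (a1 * a2 * a3) ^ p * ((a1 * b1) * (a2 * b2) * (a3 * b3) * c1 * c2 * c3) ^ q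
      = (a1 ^ p * a1 ^ q) * (b1 ^ q * ((a2 ^ p * a2 ^ q) * (b2 ^ q * ((a3 ^ p * a3 ^ q) *
          (b3 ^ q * (c1 ^ q * (c2 ^ q * c3 ^ q))))))) := by
        rw [Real.mul_rpow (by positivity) (by positivity),
          Real.mul_rpow (by positivity) (by positivity),
          Real.mul_rpow (by positivity) (by positivity),
          Real.mul_rpow (by positivity) (by positivity),
          Real.mul_rpow (by positivity) (by positivity),
          Real.mul_rpow (by positivity) (by positivity),
          Real.mul_rpow (by positivity) (by positivity),
          Real.mul_rpow (by positivity) (by positivity),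
          Real.mul_rpow (by positivity) (by positivity),
          Real.mul_rpow (by positivity) (by positivity)]
        ring
    _ ≤ a1 ^ (-η) * (b1 ^ (-η) * (a2 ^ (-η) * (b2 ^ (-η) * (a3 ^ (-η) * (b3 ^ (-η) *
          (c1 ^ (-η) * (c2 ^ (-η) * c3 ^ (-η)))))))) := by
        gcongr <;> positivity


def Econd (S : Finset ℕ) (t : (ℕ × ℕ × ℕ) × (ℕ × ℕ × ℕ)) : Finset ((ℕ × ℕ) × ℕ) :=
  if 0 < t.1.1 ∧ 0 < t.1.2.1 ∧ 0 < t.1.2.2 ∧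
     0 < t.2.1 ∧ 0 < t.2.2.1 ∧ 0 < t.2.2.2 ∧
     t.1.1.primeFactors ⊆ S ∧ t.1.2.1.primeFactors ⊆ S ∧ t.1.2.2.primeFactors ⊆ S ∧
     t.2.1.primeFactors ⊆ S ∧ t.2.2.1.primeFactors ⊆ S ∧ t.2.2.2.primeFactors ⊆ S then
    (t.1.1.divisors ×ˢ t.1.2.1.divisors) ×ˢ t.1.2.2.divisors
  else ∅

def Phi9 (t : (ℕ × ℕ × ℕ) × (ℕ × ℕ × ℕ)) (x : (ℕ × ℕ) × ℕ) : ℕ×ℕ×ℕ×ℕ×ℕ×ℕ×ℕ×ℕ×ℕ :=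
  (x.1.1, t.1.1 / x.1.1, x.1.2, t.1.2.1 / x.1.2, x.2, t.1.2.2 / x.2,
    t.2.1, t.2.2.1, t.2.2.2)

set_option maxHeartbeats 1000000 in
lemma key_lemma (h : ℕ → ℝ) (η₀ η₁ B : ℝ) (S : Finset ℕ)
    (hB : ∀ n : ℕ, |h n| * (n : ℝ) ^ (-(1:ℝ)/2 + η₀) ≤ B) (hB0 : 0 ≤ B)
    (h2η₁ : 2 * η₁ ≤ η₀) (hη₁q : η₁ ≤ 1/4)
    (m₁ m₂ m₃ s₁ s₂ s₃ : ℕ)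
    (hm₁ : 0 < m₁) (hm₂ : 0 < m₂) (hm₃ : 0 < m₃)
    (hs₁ : 0 < s₁) (hs₂ : 0 < s₂) (hs₃ : 0 < s₃)
    (hm₁S : m₁.primeFactors ⊆ S) (hm₂S : m₂.primeFactors ⊆ S) (hm₃S : m₃.primeFactors ⊆ S)
    (hs₁S : s₁.primeFactors ⊆ S) (hs₂S : s₂.primeFactors ⊆ S) (hs₃S : s₃.primeFactors ⊆ S) :
    |(ArithmeticFunction.moebius s₁ : ℝ)| * |(ArithmeticFunction.moebius s₂ : ℝ)| *
      |(ArithmeticFunction.moebius s₃ : ℝ)| * |∑ e ∈ (m₁ * m₂ * m₃).divisors, h e| /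
      ((m₁ * m₂ * m₃ * s₁ * s₂ * s₃ : ℕ) : ℝ) ^ ((1:ℝ)/2 - η₁) ≤
      B * ∑ x ∈ (m₁.divisors ×ˢ m₂.divisors) ×ˢ m₃.divisors,
        P9fn S η₁ (x.1.1, m₁ / x.1.1, x.1.2, m₂ / x.1.2, x.2, m₃ / x.2, s₁, s₂, s₃) := by
  have hmu : ∀ s : ℕ, |(ArithmeticFunction.moebius s : ℝ)| ≤ 1 := fun s => by
    exact_mod_cast ArithmeticFunction.abs_moebius_le_one
  have hNge : (0:ℝ) ≤ ((m₁ * m₂ * m₃ * s₁ * s₂ * s₃ : ℕ) : ℝ) := Nat.cast_nonneg _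
  rw [div_eq_mul_inv, ← Real.rpow_neg hNge]
  have hdiv : ∑ e ∈ (m₁ * m₂ * m₃).divisors, |h e| ≤
      ∑ x ∈ (m₁.divisors ×ˢ m₂.divisors) ×ˢ m₃.divisors, |h (x.1.1 * x.1.2 * x.2)| := by
    rw [Nat.divisors_mul, Nat.divisors_mul]
    calc ∑ e ∈ m₁.divisors * m₂.divisors * m₃.divisors, |h e|
        = ∑ e ∈ (((m₁.divisors * m₂.divisors) ×ˢ m₃.divisors).image
            fun x : ℕ × ℕ => x.1 * x.2), |h e| := by rw [Finset.image_mul_product]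
      _ ≤ ∑ x ∈ (m₁.divisors * m₂.divisors) ×ˢ m₃.divisors, |h (x.1 * x.2)| :=
          sum_image_le_aux' _ _ _ (fun b => abs_nonneg _)
      _ = ∑ d ∈ m₁.divisors * m₂.divisors, ∑ e₃ ∈ m₃.divisors, |h (d * e₃)| :=
          Finset.sum_product (s := m₁.divisors * m₂.divisors) (t := m₃.divisors)
            (f := fun x => |h (x.1 * x.2)|)
      _ = ∑ d ∈ ((m₁.divisors ×ˢ m₂.divisors).image fun y : ℕ × ℕ => y.1 * y.2),
            ∑ e₃ ∈ m₃.divisors, |h (d * e₃)| := by rw [Finset.image_mul_product]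
      _ ≤ ∑ y ∈ m₁.divisors ×ˢ m₂.divisors, ∑ e₃ ∈ m₃.divisors, |h (y.1 * y.2 * e₃)| :=
          sum_image_le_aux' _ _ _ (fun b => Finset.sum_nonneg fun _ _ => abs_nonneg _)
      _ = ∑ x ∈ (m₁.divisors ×ˢ m₂.divisors) ×ˢ m₃.divisors, |h (x.1.1 * x.1.2 * x.2)| :=
          (Finset.sum_product (s := m₁.divisors ×ˢ m₂.divisors) (t := m₃.divisors)
            (f := fun x => |h (x.1.1 * x.1.2 * x.2)|)).symm
  have hnum : |(ArithmeticFunction.moebius s₁ : ℝ)| * |(ArithmeticFunction.moebius s₂ : ℝ)| *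
      |(ArithmeticFunction.moebius s₃ : ℝ)| * |∑ e ∈ (m₁ * m₂ * m₃).divisors, h e| ≤
      ∑ x ∈ (m₁.divisors ×ˢ m₂.divisors) ×ˢ m₃.divisors, |h (x.1.1 * x.1.2 * x.2)| := by
    calc |(ArithmeticFunction.moebius s₁ : ℝ)| * |(ArithmeticFunction.moebius s₂ : ℝ)| *
        |(ArithmeticFunction.moebius s₃ : ℝ)| * |∑ e ∈ (m₁ * m₂ * m₃).divisors, h e|
        ≤ 1 * 1 * 1 * |∑ e ∈ (m₁ * m₂ * m₃).divisors, h e| := by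
          gcongr <;> exact hmu _
      _ = |∑ e ∈ (m₁ * m₂ * m₃).divisors, h e| := by ring
      _ ≤ ∑ e ∈ (m₁ * m₂ * m₃).divisors, |h e| := Finset.abs_sum_le_sum_abs _ _
      _ ≤ _ := hdiv
  calc |(ArithmeticFunction.moebius s₁ : ℝ)| * |(ArithmeticFunction.moebius s₂ : ℝ)| *
      |(ArithmeticFunction.moebius s₃ : ℝ)| * |∑ e ∈ (m₁ * m₂ * m₃).divisors, h e| *
      ((m₁ * m₂ * m₃ * s₁ * s₂ * s₃ : ℕ) : ℝ) ^ (-((1:ℝ)/2 - η₁))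
      ≤ (∑ x ∈ (m₁.divisors ×ˢ m₂.divisors) ×ˢ m₃.divisors, |h (x.1.1 * x.1.2 * x.2)|) *
        ((m₁ * m₂ * m₃ * s₁ * s₂ * s₃ : ℕ) : ℝ) ^ (-((1:ℝ)/2 - η₁)) :=
        mul_le_mul_of_nonneg_right hnum (by positivity)
    _ = ∑ x ∈ (m₁.divisors ×ˢ m₂.divisors) ×ˢ m₃.divisors, |h (x.1.1 * x.1.2 * x.2)| *
        ((m₁ * m₂ * m₃ * s₁ * s₂ * s₃ : ℕ) : ℝ) ^ (-((1:ℝ)/2 - η₁)) := Finset.sum_mul _ _ _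
    _ ≤ ∑ x ∈ (m₁.divisors ×ˢ m₂.divisors) ×ˢ m₃.divisors,
        B * P9fn S η₁ (x.1.1, m₁ / x.1.1, x.1.2, m₂ / x.1.2, x.2, m₃ / x.2, s₁, s₂, s₃) := ?_
    _ = B * ∑ x ∈ (m₁.divisors ×ˢ m₂.divisors) ×ˢ m₃.divisors,
        P9fn S η₁ (x.1.1, m₁ / x.1.1, x.1.2, m₂ / x.1.2, x.2, m₃ / x.2, s₁, s₂, s₃) :=
        (Finset.mul_sum _ _ _).symm
  apply Finset.sum_le_sum
  rintro ⟨⟨e₁, e₂⟩, e₃⟩ hx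
  simp only [Finset.mem_product, Nat.mem_divisors] at hx
  obtain ⟨⟨⟨hd₁, -⟩, hd₂, -⟩, hd₃, -⟩ := hx
  have he₁ : 0 < e₁ := Nat.pos_of_dvd_of_pos hd₁ hm₁
  have he₂ : 0 < e₂ := Nat.pos_of_dvd_of_pos hd₂ hm₂
  have he₃ : 0 < e₃ := Nat.pos_of_dvd_of_pos hd₃ hm₃
  have hk₁ : 0 < m₁ / e₁ := Nat.div_pos (Nat.le_of_dvd hm₁ hd₁) he₁
  have hk₂ : 0 < m₂ / e₂ := Nat.div_pos (Nat.le_of_dvd hm₂ hd₂) he₂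
  have hk₃ : 0 < m₃ / e₃ := Nat.div_pos (Nat.le_of_dvd hm₃ hd₃) he₃
  have he₁S : e₁.primeFactors ⊆ S := (Nat.primeFactors_mono hd₁ hm₁.ne').trans hm₁S
  have he₂S : e₂.primeFactors ⊆ S := (Nat.primeFactors_mono hd₂ hm₂.ne').trans hm₂S
  have he₃S : e₃.primeFactors ⊆ S := (Nat.primeFactors_mono hd₃ hm₃.ne').trans hm₃S
  have hk₁S : (m₁ / e₁).primeFactors ⊆ S :=
    (Nat.primeFactors_mono (Nat.div_dvd_of_dvd hd₁) hm₁.ne').trans hm₁S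
  have hk₂S : (m₂ / e₂).primeFactors ⊆ S :=
    (Nat.primeFactors_mono (Nat.div_dvd_of_dvd hd₂) hm₂.ne').trans hm₂S
  have hk₃S : (m₃ / e₃).primeFactors ⊆ S :=
    (Nat.primeFactors_mono (Nat.div_dvd_of_dvd hd₃) hm₃.ne').trans hm₃S
  simp only [P9fn]
  rw [Wfn_eq S η₁ e₁ he₁ he₁S, Wfn_eq S η₁ (m₁ / e₁) hk₁ hk₁S,
    Wfn_eq S η₁ e₂ he₂ he₂S, Wfn_eq S η₁ (m₂ / e₂) hk₂ hk₂S,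
    Wfn_eq S η₁ e₃ he₃ he₃S, Wfn_eq S η₁ (m₃ / e₃) hk₃ hk₃S,
    Wfn_eq S η₁ s₁ hs₁ hs₁S, Wfn_eq S η₁ s₂ hs₂ hs₂S, Wfn_eq S η₁ s₃ hs₃ hs₃S]
  have hE : 0 < e₁ * e₂ * e₃ := by positivity
  have hEr : (0:ℝ) < ((e₁ * e₂ * e₃ : ℕ) : ℝ) := by exact_mod_cast hE
  have hone : ((e₁ * e₂ * e₃ : ℕ) : ℝ) ^ (-(1:ℝ)/2 + η₀) *
      ((e₁ * e₂ * e₃ : ℕ) : ℝ) ^ ((1:ℝ)/2 - η₀) = 1 := by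
    rw [← Real.rpow_add hEr]; norm_num
  have hhE : |h (e₁ * e₂ * e₃)| ≤ B * ((e₁ * e₂ * e₃ : ℕ) : ℝ) ^ ((1:ℝ)/2 - η₀) := by
    calc |h (e₁ * e₂ * e₃)|
        = |h (e₁ * e₂ * e₃)| * (((e₁ * e₂ * e₃ : ℕ) : ℝ) ^ (-(1:ℝ)/2 + η₀) *
          ((e₁ * e₂ * e₃ : ℕ) : ℝ) ^ ((1:ℝ)/2 - η₀)) := by rw [hone, mul_one]
      _ = (|h (e₁ * e₂ * e₃)| * ((e₁ * e₂ * e₃ : ℕ) : ℝ) ^ (-(1:ℝ)/2 + η₀)) *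
          ((e₁ * e₂ * e₃ : ℕ) : ℝ) ^ ((1:ℝ)/2 - η₀) := by ring
      _ ≤ B * ((e₁ * e₂ * e₃ : ℕ) : ℝ) ^ ((1:ℝ)/2 - η₀) :=
          mul_le_mul_of_nonneg_right (hB _) (by positivity)
  have hNnat : m₁ * m₂ * m₃ * s₁ * s₂ * s₃ =
      e₁ * (m₁ / e₁) * (e₂ * (m₂ / e₂)) * (e₃ * (m₃ / e₃)) * s₁ * s₂ * s₃ := by
    rw [Nat.mul_div_cancel' hd₁, Nat.mul_div_cancel' hd₂, Nat.mul_div_cancel' hd₃]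
  have hNc : ((m₁ * m₂ * m₃ * s₁ * s₂ * s₃ : ℕ) : ℝ) =
      ((e₁ : ℝ) * ((m₁ / e₁ : ℕ) : ℝ)) * ((e₂ : ℝ) * ((m₂ / e₂ : ℕ) : ℝ)) *
        ((e₃ : ℝ) * ((m₃ / e₃ : ℕ) : ℝ)) * (s₁ : ℝ) * (s₂ : ℝ) * (s₃ : ℝ) := by
    rw [hNnat]; push_cast; ring
  have hEc : ((e₁ * e₂ * e₃ : ℕ) : ℝ) = (e₁ : ℝ) * (e₂ : ℝ) * (e₃ : ℝ) := by push_cast; ring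
  calc |h (e₁ * e₂ * e₃)| * ((m₁ * m₂ * m₃ * s₁ * s₂ * s₃ : ℕ) : ℝ) ^ (-((1:ℝ)/2 - η₁))
      ≤ (B * ((e₁ * e₂ * e₃ : ℕ) : ℝ) ^ ((1:ℝ)/2 - η₀)) *
        ((m₁ * m₂ * m₃ * s₁ * s₂ * s₃ : ℕ) : ℝ) ^ (-((1:ℝ)/2 - η₁)) :=
        mul_le_mul_of_nonneg_right hhE (by positivity)
    _ = B * (((e₁ * e₂ * e₃ : ℕ) : ℝ) ^ ((1:ℝ)/2 - η₀) *
        ((m₁ * m₂ * m₃ * s₁ * s₂ * s₃ : ℕ) : ℝ) ^ (-((1:ℝ)/2 - η₁))) := by ring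
    _ ≤ B * ((e₁ : ℝ) ^ (-η₁) * (((m₁ / e₁ : ℕ) : ℝ) ^ (-η₁) * ((e₂ : ℝ) ^ (-η₁) *
        (((m₂ / e₂ : ℕ) : ℝ) ^ (-η₁) * ((e₃ : ℝ) ^ (-η₁) * (((m₃ / e₃ : ℕ) : ℝ) ^ (-η₁) *
        ((s₁ : ℝ) ^ (-η₁) * ((s₂ : ℝ) ^ (-η₁) * (s₃ : ℝ) ^ (-η₁))))))))) := by
        apply mul_le_mul_of_nonneg_left _ hB0
        rw [hEc, hNc]
        exact crux_ineq ((1:ℝ)/2 - η₀) (-((1:ℝ)/2 - η₁)) η₁ (by linarith) (by linarith)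
          _ _ _ _ _ _ _ _ _
          (by exact_mod_cast he₁) (by exact_mod_cast he₂) (by exact_mod_cast he₃)
          (by exact_mod_cast hk₁) (by exact_mod_cast hk₂) (by exact_mod_cast hk₃)
          (by exact_mod_cast hs₁) (by exact_mod_cast hs₂) (by exact_mod_cast hs₃)

set_option maxHeartbeats 1000000 in
open ArithmeticFunction in
theorem stmt19 (h : ℕ → ℝ) (η₀ : ℝ) (hη₀ : 0 < η₀)
    (hsum : Summable (fun d : ℕ => |h d| * (d : ℝ) ^ (-(1 : ℝ) / 2 + η₀)))
    (S : Finset ℕ) (hS : ∀ p ∈ S, p.Prime) :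
    ∃ η₁ : ℝ, 0 < η₁ ∧ η₁ < η₀ ∧
      Summable (fun t : (ℕ × ℕ × ℕ) × (ℕ × ℕ × ℕ) =>
        if 0 < t.1.1 ∧ 0 < t.1.2.1 ∧ 0 < t.1.2.2 ∧
           0 < t.2.1 ∧ 0 < t.2.2.1 ∧ 0 < t.2.2.2 ∧
           t.1.1.primeFactors ⊆ S ∧ t.1.2.1.primeFactors ⊆ S ∧ t.1.2.2.primeFactors ⊆ S ∧
           t.2.1.primeFactors ⊆ S ∧ t.2.2.1.primeFactors ⊆ S ∧ t.2.2.2.primeFactors ⊆ S then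
          |(moebius t.2.1 : ℝ)| * |(moebius t.2.2.1 : ℝ)| * |(moebius t.2.2.2 : ℝ)| *
            |∑ e ∈ (t.1.1 * t.1.2.1 * t.1.2.2).divisors, h e| /
            ((t.1.1 * t.1.2.1 * t.1.2.2 * t.2.1 * t.2.2.1 * t.2.2.2 : ℕ) : ℝ) ^
              ((1 : ℝ) / 2 - η₁)
        else 0) := by
  classical
  set η₁ : ℝ := min (η₀ / 2) (1 / 4) with hη₁def
  have hη₁pos : 0 < η₁ := lt_min (by linarith) (by norm_num)
  have hη₁le : η₁ ≤ η₀ / 2 := min_le_left _ _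
  have hη₁lt : η₁ < η₀ := lt_of_le_of_lt hη₁le (by linarith)
  have h2η₁ : 2 * η₁ ≤ η₀ := by linarith
  have hη₁q : η₁ ≤ 1 / 4 := min_le_right _ _
  set B : ℝ := ∑' d : ℕ, |h d| * (d : ℝ) ^ (-(1 : ℝ) / 2 + η₀) with hBdef
  have hB : ∀ n : ℕ, |h n| * (n : ℝ) ^ (-(1:ℝ)/2 + η₀) ≤ B := fun n =>
    hsum.le_tsum n (fun j _ => by positivity)
  have hB0 : 0 ≤ B := le_trans (by positivity) (hB 0)
  have hWsum : Summable (Wfn S η₁) := smooth_summable η₁ hη₁pos S hS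
  have hP9sum : Summable (P9fn S η₁) := P9fn_summable S η₁ hWsum
  refine ⟨η₁, hη₁pos, hη₁lt, ?_⟩
  refine summable_of_sum_le (c := B * ∑' z, P9fn S η₁ z) (Pi.le_def.mpr fun t => ?_)
    (fun u => ?_)
  · simp only [Pi.zero_apply]
    split
    · positivity
    · exact le_rfl
  · have hinj : ∀ x ∈ u.sigma (fun t => Econd S t), ∀ y ∈ u.sigma (fun t => Econd S t),
        (fun y : Σ _ : (ℕ × ℕ × ℕ) × (ℕ × ℕ × ℕ), (ℕ × ℕ) × ℕ => Phi9 y.1 y.2) x =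
        (fun y : Σ _ : (ℕ × ℕ × ℕ) × (ℕ × ℕ × ℕ), (ℕ × ℕ) × ℕ => Phi9 y.1 y.2) y →
        x = y := by
      rintro ⟨⟨⟨m₁, m₂, m₃⟩, s₁, s₂, s₃⟩, ⟨⟨e₁, e₂⟩, e₃⟩⟩ hx
        ⟨⟨⟨n₁, n₂, n₃⟩, r₁, r₂, r₃⟩, ⟨⟨f₁, f₂⟩, f₃⟩⟩ hy heq
      obtain ⟨-, hxE⟩ := Finset.mem_sigma.mp hx
      obtain ⟨-, hyE⟩ := Finset.mem_sigma.mp hy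
      simp only [Econd] at hxE hyE
      split at hxE
      swap
      · exact absurd hxE (Finset.notMem_empty _)
      split at hyE
      swap
      · exact absurd hyE (Finset.notMem_empty _)
      simp only [Finset.mem_product, Nat.mem_divisors] at hxE hyE
      obtain ⟨⟨⟨hd₁, -⟩, hd₂, -⟩, hd₃, -⟩ := hxE
      obtain ⟨⟨⟨hf₁, -⟩, hf₂, -⟩, hf₃, -⟩ := hyE
      simp only [Phi9, Prod.mk.injEq] at heq
      obtain ⟨q1, q2, q3, q4, q5, q6, q7, q8, q9⟩ := heq
      subst q1; subst q3; subst q5; subst q7; subst q8; subst q9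
      have hm1 : m₁ = n₁ := by
        rw [← Nat.mul_div_cancel' hd₁, q2, Nat.mul_div_cancel' hf₁]
      have hm2 : m₂ = n₂ := by
        rw [← Nat.mul_div_cancel' hd₂, q4, Nat.mul_div_cancel' hf₂]
      have hm3 : m₃ = n₃ := by
        rw [← Nat.mul_div_cancel' hd₃, q6, Nat.mul_div_cancel' hf₃]
      subst hm1; subst hm2; subst hm3
      rfl
    calc ∑ t ∈ u, (fun t : (ℕ × ℕ × ℕ) × (ℕ × ℕ × ℕ) =>
          if 0 < t.1.1 ∧ 0 < t.1.2.1 ∧ 0 < t.1.2.2 ∧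
             0 < t.2.1 ∧ 0 < t.2.2.1 ∧ 0 < t.2.2.2 ∧
             t.1.1.primeFactors ⊆ S ∧ t.1.2.1.primeFactors ⊆ S ∧ t.1.2.2.primeFactors ⊆ S ∧
             t.2.1.primeFactors ⊆ S ∧ t.2.2.1.primeFactors ⊆ S ∧ t.2.2.2.primeFactors ⊆ S then
            |(moebius t.2.1 : ℝ)| * |(moebius t.2.2.1 : ℝ)| * |(moebius t.2.2.2 : ℝ)| *
              |∑ e ∈ (t.1.1 * t.1.2.1 * t.1.2.2).divisors, h e| /
              ((t.1.1 * t.1.2.1 * t.1.2.2 * t.2.1 * t.2.2.1 * t.2.2.2 : ℕ) : ℝ) ^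
                ((1 : ℝ) / 2 - η₁)
          else 0) t
        ≤ ∑ t ∈ u, B * ∑ x ∈ Econd S t, P9fn S η₁ (Phi9 t x) := by
          apply Finset.sum_le_sum
          intro t _
          obtain ⟨⟨m₁, m₂, m₃⟩, s₁, s₂, s₃⟩ := t
          simp only [Econd, Phi9]
          by_cases hc : 0 < m₁ ∧ 0 < m₂ ∧ 0 < m₃ ∧ 0 < s₁ ∧ 0 < s₂ ∧ 0 < s₃ ∧
            m₁.primeFactors ⊆ S ∧ m₂.primeFactors ⊆ S ∧ m₃.primeFactors ⊆ S ∧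
            s₁.primeFactors ⊆ S ∧ s₂.primeFactors ⊆ S ∧ s₃.primeFactors ⊆ S
          · rw [if_pos hc, if_pos hc]
            obtain ⟨c1, c2, c3, c4, c5, c6, c7, c8, c9, c10, c11, c12⟩ := hc
            exact key_lemma h η₀ η₁ B S hB hB0 h2η₁ hη₁q m₁ m₂ m₃ s₁ s₂ s₃
              c1 c2 c3 c4 c5 c6 c7 c8 c9 c10 c11 c12
          · rw [if_neg hc, if_neg hc]
            simp
      _ = B * ∑ t ∈ u, ∑ x ∈ Econd S t, P9fn S η₁ (Phi9 t x) := (Finset.mul_sum _ _ _).symm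
      _ = B * ∑ y ∈ u.sigma (fun t => Econd S t), P9fn S η₁ (Phi9 y.1 y.2) := by
          rw [Finset.sum_sigma]
      _ = B * ∑ z ∈ (u.sigma (fun t => Econd S t)).image
            (fun y : Σ _ : (ℕ × ℕ × ℕ) × (ℕ × ℕ × ℕ), (ℕ × ℕ) × ℕ => Phi9 y.1 y.2),
            P9fn S η₁ z := by
          rw [Finset.sum_image hinj]
      _ ≤ B * ∑' z, P9fn S η₁ z :=
          mul_le_mul_of_nonneg_left
            (Summable.sum_le_tsum _ (fun z _ => P9fn_nonneg S η₁ z) hP9sum) hB0
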